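/- Let k ≥ 3, let λ be a non-uniform length function, and let 2 ≤ h < v ≤ k be integers with λ(v) < λ(h). Let W be the wish list vector of the (h,v)-comb instance and let π_H be the exchange whose unique trading cycle is the horizontal cycle c_H = (b_1 → b_2 → … → b_h → b_1). Then every truthful (k,λ)-BE mechanism f that admits approximation ratio r for some real r ≥ 1 satisfies f(W) = π_H. -/

import Mathlib

/-!
Barter exchange (BE) framework, following Emek–Shpiro,
"Barter Exchange with Bounded Trading Cycles".
-/

open Finset

namespace BarterExchange

noncomputable section

/-- The length of the trading cycle of `π` containing agent `i`
(equals `0` when `i` does not partake in `π`). -/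
def cycLen {n : ℕ} (π : Equiv.Perm (Fin n)) (i : Fin n) : ℕ :=
  (π.cycleOf i).support.card

/-- The utility of agent `i` from the exchange `π` under the length function `lam`:
`lam ℓ` if `i` partakes in a trading cycle of length `ℓ`, and `0` otherwise. -/
def utility {n : ℕ} (lam : ℕ → ℝ) (π : Equiv.Perm (Fin n)) (i : Fin n) : ℝ :=
  if π i ≠ i then lam (cycLen π i) else 0

/-- Social welfare of an exchange: the sum of the agents' utilities,
which equals `∑_{trading cycles c} len(c)·λ(len(c))`. -/
def SW {n : ℕ} (lam : ℕ → ℝ) (π : Equiv.Perm (Fin n)) : ℝ :=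
  ∑ i, utility lam π i

/-- A wish list vector: `W i ⊆ [n] ∖ {i}`. -/
def IsWishList {n : ℕ} (W : Fin n → Finset (Fin n)) : Prop :=
  ∀ i, i ∉ W i

/-- `π ∈ Π_W^k`: every partaking agent is sent to an agent on her wish list and
all trading cycles have length at most `k`. -/
def Feasible (k : ℕ) {n : ℕ} (W : Fin n → Finset (Fin n)) (π : Equiv.Perm (Fin n)) : Prop :=
  ∀ i : Fin n, π i ≠ i → π i ∈ W i ∧ cycLen π i ≤ k

/-- A length function for length bound `k`: a non-increasing map `{2,…,k} → (0,1]`. -/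
def IsLengthFunction (k : ℕ) (lam : ℕ → ℝ) : Prop :=
  (∀ ℓ : ℕ, 2 ≤ ℓ → ℓ ≤ k → 0 < lam ℓ ∧ lam ℓ ≤ 1) ∧
    ∀ ℓ ℓ' : ℕ, 2 ≤ ℓ → ℓ ≤ ℓ' → ℓ' ≤ k → lam ℓ' ≤ lam ℓ

/-- A mechanism assigns an exchange to every number of agents and wish list vector. -/
abbrev Mechanism : Type :=
  (n : ℕ) → (Fin n → Finset (Fin n)) → Equiv.Perm (Fin n)

/-- A `(k,λ)`-BE mechanism outputs, on every wish list vector `W`,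
an exchange in `Π_W^k` (individual rationality). -/
def IsMechanism (k : ℕ) (f : Mechanism) : Prop :=
  ∀ (n : ℕ) (W : Fin n → Finset (Fin n)), IsWishList W → Feasible k W (f n W)

/-- Truthfulness: under the subset wish list assumption, no agent can gain by
reporting a strict subset of her true wish list. -/
def Truthful (k : ℕ) (lam : ℕ → ℝ) (f : Mechanism) : Prop :=
  ∀ (n : ℕ) (Wstar W : Fin n → Finset (Fin n)), IsWishList Wstar →
    (∀ j, W j ⊆ Wstar j) → ∀ i : Fin n,
      utility lam (f n W) i ≤ utility lam (f n (Function.update W i (Wstar i))) i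

/-- `f` admits approximation ratio `r ≥ 1`: on every wish list vector the social welfare of
`f`'s outcome is at least `1/r` times that of any feasible exchange. -/
def ApproxRatio (k : ℕ) (lam : ℕ → ℝ) (f : Mechanism) (r : ℝ) : Prop :=
  1 ≤ r ∧
    ∀ (n : ℕ) (Wstar : Fin n → Finset (Fin n)), IsWishList Wstar →
      ∀ π : Equiv.Perm (Fin n), Feasible k Wstar π →
        SW lam (f n Wstar) ≥ (1 / r) * SW lam π

/-- The wish list vector of the `(h,v)`-comb instance, over agents `Fin h × Fin v`:
agent `(i, 0)` is the black agent `bᵢ` with wish list `{b_{i+1}, x_{i,1}}`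
(black indices cyclic), and agent `(i, j)` for `j ≠ 0` is the white agent `x_{i,j}`
with wish list `{x_{i,j+1}}`, where `x_{i,v} := bᵢ` (white indices cyclic in `Fin v`). -/
def combW (h v : ℕ) : Fin h × Fin v → Finset (Fin h × Fin v) := fun p =>
  if p.2.val = 0 then
    {(finRotate h p.1, p.2), (p.1, finRotate v p.2)}
  else
    {(p.1, finRotate v p.2)}

/-- The exchange `π_H` whose unique trading cycle is the horizontal cycle
`c_H = (b₁ → b₂ → … → b_h → b₁)`: it rotates the black agents and fixes all whites. -/
def piH (h v : ℕ) : Equiv.Perm (Fin h × Fin v) where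
  toFun p := if p.2.val = 0 then (finRotate h p.1, p.2) else p
  invFun p := if p.2.val = 0 then ((finRotate h).symm p.1, p.2) else p
  left_inv := by
    rintro ⟨a, b⟩
    by_cases hb : b.val = 0 <;> simp only [hb, if_true, if_false, Equiv.symm_apply_apply, Equiv.apply_symm_apply, ite_true]
  right_inv := by
    rintro ⟨a, b⟩
    by_cases hb : b.val = 0 <;> simp only [hb, if_true, if_false, Equiv.symm_apply_apply, Equiv.apply_symm_apply, ite_true]

section Aux



open Equiv Equiv.Perm

variable {γ δ : Type*} [Fintype γ] [DecidableEq γ] [Fintype δ] [DecidableEq δ]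

/-- utility on an arbitrary fintype -/
def utilA (lam : ℕ → ℝ) (π : Equiv.Perm γ) (p : γ) : ℝ :=
  if π p ≠ p then lam ((π.cycleOf p).support.card) else 0

/-- `permCongr` as a `MulEquiv`. -/
def permCongrMul (e : γ ≃ δ) : Equiv.Perm γ ≃* Equiv.Perm δ :=
  { e.permCongr with map_mul' := fun x y => by ext z; simp [Equiv.Perm.mul_apply] }

lemma permCongr_zpow (e : γ ≃ δ) (σ : Equiv.Perm γ) (m : ℤ) :
    (e.permCongr σ) ^ m = e.permCongr (σ ^ m) := by
  have := map_zpow (permCongrMul e) σ m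
  simpa [permCongrMul] using this.symm

lemma sameCycle_permCongr (e : γ ≃ δ) (σ : Equiv.Perm γ) (p q : γ) :
    (e.permCongr σ).SameCycle (e p) (e q) ↔ σ.SameCycle p q := by
  constructor
  · rintro ⟨m, hm⟩
    refine ⟨m, e.injective ?_⟩
    rw [permCongr_zpow] at hm
    simpa using hm
  · rintro ⟨m, hm⟩
    refine ⟨m, ?_⟩
    rw [permCongr_zpow]
    simp [hm]

lemma card_cycleOf_permCongr (e : γ ≃ δ) (σ : Equiv.Perm γ) (p : γ) :
    (((e.permCongr σ).cycleOf (e p)).support.card) = ((σ.cycleOf p).support.card) := by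
  by_cases hp : σ p = p
  · have h1 : (e.permCongr σ).cycleOf (e p) = 1 := by
      rw [Equiv.Perm.cycleOf_eq_one_iff]; simp [hp]
    have h2 : σ.cycleOf p = 1 := by rw [Equiv.Perm.cycleOf_eq_one_iff]; exact hp
    rw [h1, h2]; simp
  · have hp' : (e.permCongr σ) (e p) ≠ e p := by simp [hp]
    have hsupp : ((e.permCongr σ).cycleOf (e p)).support
        = (σ.cycleOf p).support.map e.toEmbedding := by
      ext y
      rw [Finset.mem_map, Equiv.Perm.mem_support_cycleOf_iff' hp']
      constructor
      · intro hy
        refine ⟨e.symm y, ?_, e.apply_symm_apply y⟩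
        rw [Equiv.Perm.mem_support_cycleOf_iff' hp]
        exact (sameCycle_permCongr e σ p (e.symm y)).mp (by rwa [e.apply_symm_apply])
      · rintro ⟨a, ha, rfl⟩
        exact (sameCycle_permCongr e σ p a).mpr
          ((Equiv.Perm.mem_support_cycleOf_iff' hp).mp ha)
    rw [hsupp, Finset.card_map]

lemma utility_permCongr {n : ℕ} (e : γ ≃ Fin n) (lam : ℕ → ℝ) (σ : Equiv.Perm γ) (p : γ) :
    utility lam (e.permCongr σ) (e p) = utilA lam σ p := by
  unfold utility utilA cycLen
  by_cases hp : σ p = p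
  · rw [if_neg (by simp [hp]), if_neg (by simp [hp])]
  · rw [if_pos (by simp [hp]), if_pos (by simp [hp]), card_cycleOf_permCongr]

lemma SW_permCongr {n : ℕ} (e : γ ≃ Fin n) (lam : ℕ → ℝ) (σ : Equiv.Perm γ) :
    SW lam (e.permCongr σ) = ∑ p, utilA lam σ p := by
  unfold SW
  rw [← Equiv.sum_comp e (fun a => utility lam (e.permCongr σ) a)]
  exact Finset.sum_congr rfl fun p _ => utility_permCongr e lam σ p



end Aux

section CombAux

open Equiv Equiv.Perm

lemma finRotate_val {n : ℕ} (hn : 0 < n) (a : Fin n) :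
    (finRotate n a).val = (a.val + 1) % n := by
  obtain ⟨m, rfl⟩ : ∃ m, n = m + 1 := ⟨n - 1, by omega⟩
  rw [finRotate_succ_apply, Fin.add_def]
  conv_rhs => rw [Nat.add_mod]
  rw [Nat.mod_eq_of_lt a.isLt]
  rfl

lemma finRotate_ne {n : ℕ} (hn : 2 ≤ n) (a : Fin n) : finRotate n a ≠ a := by
  intro H
  have hval : (a.val + 1) % n = a.val := by
    rw [← finRotate_val (by omega) a, H]
  rcases lt_or_ge (a.val + 1) n with hlt | hge
  · rw [Nat.mod_eq_of_lt hlt] at hval; omega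
  · have : a.val + 1 = n := by have := a.isLt; omega
    rw [this, Nat.mod_self] at hval
    omega

open Fin.NatCast Fin.CommRing in
lemma exists_finRotate_pow {n : ℕ} (hn : 0 < n) (a b : Fin n) :
    ∃ m : ℕ, ((finRotate n) ^ m) a = b := by
  obtain ⟨m, rfl⟩ : ∃ m, n = m + 1 := ⟨n - 1, by omega⟩
  have key : ∀ k : ℕ, ((finRotate (m+1)) ^ k) a = a + (k : Fin (m+1)) := by
    intro k
    induction k with
    | zero => simp
    | succ k ih =>
      rw [pow_succ', Equiv.Perm.mul_apply, ih, finRotate_succ_apply]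
      push_cast
      ring
  refine ⟨(b - a).val, ?_⟩
  rw [key, Fin.cast_val_eq_self]
  abel

/-- The wish lists of the comb instance where blacks in `S` have dropped
their vertical-cycle wish. -/
def WS (h v : ℕ) (S : Finset (Fin h)) : Fin h × Fin v → Finset (Fin h × Fin v) := fun p =>
  if p.2.val = 0 then
    if p.1 ∈ S then {(finRotate h p.1, p.2)}
    else {(finRotate h p.1, p.2), (p.1, finRotate v p.2)}
  else {(p.1, finRotate v p.2)}

lemma WS_empty (h v : ℕ) : WS h v ∅ = combW h v := by
  funext p
  unfold WS combW
  simp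

variable {h v : ℕ} {S : Finset (Fin h)} {π : Equiv.Perm (Fin h × Fin v)}

/-- preimage structure: anybody mapped onto a white `(i,j)` must be `(i, j-1)`. -/
lemma Lpre (hv : 2 ≤ v) (hfeas : ∀ p, π p ≠ p → π p ∈ WS h v S p)
    {q : Fin h × Fin v} {i : Fin h} {j : Fin v} (hj : j.val ≠ 0)
    (hq : π q = (i, j)) (hne : q ≠ (i, j)) :
    q.1 = i ∧ finRotate v q.2 = j ∧ q.2.val + 1 = j.val := by
  have hpart : π q ≠ q := by rw [hq]; exact fun hc => hne hc.symm
  have hm := hfeas q hpart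
  unfold WS at hm
  have hvert : π q = (q.1, finRotate v q.2) := by
    by_cases h0 : q.2.val = 0
    · rw [if_pos h0] at hm
      have : π q ≠ (finRotate h q.1, q.2) := by
        intro hc
        rw [hq] at hc
        have := congrArg Prod.snd hc
        simp at this
        rw [this] at hj
        exact hj h0
      split at hm
      · exact absurd (Finset.mem_singleton.mp hm) this
      · rcases Finset.mem_insert.mp hm with hA | hB
        · exact absurd hA this
        · exact Finset.mem_singleton.mp hB
    · rw [if_neg h0] at hm
      exact Finset.mem_singleton.mp hm
  rw [hq] at hvert
  have h1 : i = q.1 := congrArg Prod.fst hvert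
  have h2 : j = finRotate v q.2 := congrArg Prod.snd hvert
  refine ⟨h1.symm, h2.symm, ?_⟩
  have hval : j.val = (q.2.val + 1) % v := by rw [h2, finRotate_val (by omega)]
  have hlt := q.2.isLt
  rcases lt_or_ge (q.2.val + 1) v with hlt' | hge
  · rw [Nat.mod_eq_of_lt hlt'] at hval; omega
  · have : q.2.val + 1 = v := by omega
    rw [this, Nat.mod_self] at hval
    exact absurd hval hj

/-- if a white of column `i` partakes, the black heading column `i` goes vertical. -/
lemma Lwhite (hv : 2 ≤ v) (hfeas : ∀ p, π p ≠ p → π p ∈ WS h v S p) {i : Fin h} :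
    ∀ (m : ℕ) (j : Fin v), j.val = m → j.val ≠ 0 → π (i, j) ≠ (i, j) →
      ∀ z : Fin v, z.val = 0 → π (i, z) = (i, finRotate v z) := by
  intro m
  induction m using Nat.strong_induction_on with
  | _ m ih =>
    intro j hjm hj0 hpart z hz
    set q := π⁻¹ (i, j) with hqdef
    have hπq : π q = (i, j) := Equiv.apply_symm_apply π (i, j)
    have hqne : q ≠ (i, j) := by
      intro hc
      apply hpart
      rw [← hc, hπq, hc]
    obtain ⟨h1, h2, h3⟩ := Lpre hv hfeas hj0 hπq hqne
    by_cases hq0 : q.2.val = 0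
    · have hq2 : q.2 = z := Fin.ext (by omega)
      have hqz : (i, z) = q := by rw [← h1, ← hq2]
      rw [← hqz] at hπq
      rw [hπq, ← h2, hq2]
    · have hqeq : (i, q.2) = q := by rw [← h1]
      refine ih q.2.val (by omega) q.2 rfl hq0 ?_ z hz
      rw [hqeq, hπq]
      intro hc
      have := congrArg Prod.snd hc
      simp at this
      rw [this] at h3
      omega

/-- if the black of column `i` goes vertical, the whole column is a vertical cycle. -/
lemma Lcol (hv : 2 ≤ v) (hfeas : ∀ p, π p ≠ p → π p ∈ WS h v S p) {i : Fin h}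
    {z : Fin v} (hz : z.val = 0) (hhead : π (i, z) = (i, finRotate v z)) :
    ∀ j : Fin v, π (i, j) = (i, finRotate v j) := by
  have key : ∀ (m : ℕ) (j : Fin v), j.val = m → π (i, j) = (i, finRotate v j) := by
    intro m
    induction m with
    | zero =>
      intro j hj
      have : j = z := Fin.ext (by omega)
      rw [this]; exact hhead
    | succ m ih =>
      intro j hj
      have hmv : m < v := by omega
      set j' : Fin v := ⟨m, hmv⟩ with hj'
      have hrot : finRotate v j' = j := by
        have hjv := j.isLt
        apply Fin.ext
        rw [finRotate_val (by omega)]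
        show (m + 1) % v = j.val
        rw [Nat.mod_eq_of_lt (by omega)]
        omega
      have hprev : π (i, j') = (i, j) := by rw [ih j' rfl, hrot]
      have hpart : π (i, j) ≠ (i, j) := by
        intro hc
        have := π.injective (hc.trans hprev.symm)
        have := congrArg Prod.snd this
        simp [hj'] at this
        rw [this] at hj
        simp at hj
      have hm := hfeas _ hpart
      unfold WS at hm
      rw [if_neg (by simp; omega)] at hm
      exact Finset.mem_singleton.mp hm
  intro j
  exact key j.val j rfl

/-- if one black goes horizontal, all blacks go horizontal. -/
lemma Lhoriz (hh : 2 ≤ h) (hv : 2 ≤ v) (hfeas : ∀ p, π p ≠ p → π p ∈ WS h v S p)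
    {z : Fin v} (hz : z.val = 0) {i0 : Fin h}
    (h0 : π (i0, z) = (finRotate h i0, z)) :
    ∀ i : Fin h, π (i, z) = (finRotate h i, z) := by
  have step : ∀ i : Fin h, π (i, z) = (finRotate h i, z) →
      π (finRotate h i, z) = (finRotate h (finRotate h i), z) := by
    intro i hi
    set i' := finRotate h i with hi'
    have hpart : π (i', z) ≠ (i', z) := by
      intro hc
      have := π.injective (hi.trans hc.symm)
      have := congrArg Prod.fst this
      exact finRotate_ne hh i (by simpa [hi'] using this.symm)
    have hm := hfeas _ hpart
    unfold WS at hm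
    rw [if_pos hz] at hm
    have hcases : π (i', z) = (finRotate h i', z) ∨ π (i', z) = (i', finRotate v z) := by
      split at hm
      · exact Or.inl (Finset.mem_singleton.mp hm)
      · rcases Finset.mem_insert.mp hm with hA | hB
        · exact Or.inl hA
        · exact Or.inr (Finset.mem_singleton.mp hB)
    rcases hcases with hA | hB
    · exact hA
    · exfalso
      have hcol := Lcol hv hfeas hz hB
      have hlast := hcol ⟨v - 1, by omega⟩
      have hwrap : finRotate v (⟨v - 1, by omega⟩ : Fin v) = z := by
        apply Fin.ext
        rw [finRotate_val (by omega)]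
        have : v - 1 + 1 = v := by omega
        rw [this, Nat.mod_self, hz]
      rw [hwrap] at hlast
      have heq := π.injective (hlast.trans hi.symm)
      have h2 := congrArg Prod.snd heq
      have h3 : v - 1 = z.val := congrArg Fin.val h2
      omega
  intro i
  obtain ⟨m, rfl⟩ := exists_finRotate_pow (show 0 < h by omega) i0 i
  have key : ∀ m : ℕ, π (((finRotate h) ^ m) i0, z)
      = (finRotate h (((finRotate h) ^ m) i0), z) := by
    intro m
    induction m with
    | zero => simpa using h0
    | succ m ih =>
      rw [pow_succ', Equiv.Perm.mul_apply]
      exact step _ ih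
  exact key m

/-- if one black goes horizontal, the outcome is exactly `π_H`. -/
lemma LeqPiH (hh : 2 ≤ h) (hv : 2 ≤ v) (hfeas : ∀ p, π p ≠ p → π p ∈ WS h v S p)
    {z : Fin v} (hz : z.val = 0) {i0 : Fin h}
    (h0 : π (i0, z) = (finRotate h i0, z)) :
    π = piH h v := by
  have hall := Lhoriz hh hv hfeas hz h0
  have hwhite : ∀ (i : Fin h) (j : Fin v), j.val ≠ 0 → π (i, j) = (i, j) := by
    intro i j hj
    by_contra hc
    have hvert := Lwhite hv hfeas j.val j rfl hj hc z hz
    rw [hall i] at hvert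
    have h2 : z = finRotate v z := congrArg Prod.snd hvert
    have h3 := congrArg Fin.val h2
    rw [finRotate_val (show 0 < v by omega)] at h3
    rw [hz] at h3
    have h1v : (0 + 1) % v = 1 := Nat.mod_eq_of_lt (by omega)
    omega
  apply Equiv.ext
  rintro ⟨a, b⟩
  show π (a, b) = piH h v (a, b)
  by_cases hb : b.val = 0
  · have hbz : b = z := Fin.ext (by omega)
    rw [hbz, hall a]
    simp [piH, hz]
  · rw [hwhite a b hb]
    simp [piH, hb]

lemma piH_pow (m : ℕ) (a : Fin h) {z : Fin v} (hz : z.val = 0) :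
    ((piH h v) ^ m) (a, z) = (((finRotate h) ^ m) a, z) := by
  induction m with
  | zero => simp
  | succ m ih =>
    rw [pow_succ', Equiv.Perm.mul_apply, ih, pow_succ', Equiv.Perm.mul_apply]
    simp [piH, hz]

lemma piH_apply_black (a : Fin h) {z : Fin v} (hz : z.val = 0) :
    piH h v (a, z) = (finRotate h a, z) := by simp [piH, hz]

lemma piH_apply_white (a : Fin h) {j : Fin v} (hj : j.val ≠ 0) :
    piH h v (a, j) = (a, j) := by simp [piH, hj]

lemma card_cycleOf_piH (hh : 2 ≤ h) (hv : 2 ≤ v) {z : Fin v} (hz : z.val = 0) (i : Fin h) :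
    (((piH h v).cycleOf (i, z)).support).card = h := by
  have hne : piH h v (i, z) ≠ (i, z) := by
    rw [piH_apply_black i hz]
    intro hc
    exact finRotate_ne hh i (congrArg Prod.fst hc)
  have hsupp : ((piH h v).cycleOf (i, z)).support = Finset.univ ×ˢ {z} := by
    ext ⟨a, b⟩
    rw [Equiv.Perm.mem_support_cycleOf_iff' hne, Finset.mem_product]
    constructor
    · intro hsc
      obtain ⟨m, -, hm⟩ := hsc.exists_pow_eq'
      rw [piH_pow m i hz] at hm
      have := congrArg Prod.snd hm
      simp at this
      simp [← this]
    · rintro ⟨-, hb⟩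
      have hbz : b = z := by simpa using hb
      obtain ⟨m, hm⟩ := exists_finRotate_pow (show 0 < h by omega) i a
      exact ⟨(m : ℤ), by rw [zpow_natCast, piH_pow m i hz, hm, hbz]⟩
  rw [hsupp, Finset.card_product]
  simp

lemma card_cycleOf_vert (hv : 2 ≤ v) {i : Fin h} {z : Fin v} (hz : z.val = 0)
    (hcol : ∀ j : Fin v, π (i, j) = (i, finRotate v j)) :
    v ≤ ((π.cycleOf (i, z)).support).card := by
  have hne : π (i, z) ≠ (i, z) := by
    rw [hcol z]
    intro hc
    exact finRotate_ne hv z (congrArg Prod.snd hc)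
  have hpow : ∀ m : ℕ, (π ^ m) (i, z) = (i, ((finRotate v) ^ m) z) := by
    intro m
    induction m with
    | zero => simp
    | succ m ih =>
      rw [pow_succ', Equiv.Perm.mul_apply, ih, hcol, pow_succ', Equiv.Perm.mul_apply]
  have hsub : (Finset.univ.image (fun j : Fin v => (i, j)))
      ⊆ (π.cycleOf (i, z)).support := by
    intro p hp
    obtain ⟨j, -, rfl⟩ := Finset.mem_image.mp hp
    rw [Equiv.Perm.mem_support_cycleOf_iff' hne]
    obtain ⟨m, hm⟩ := exists_finRotate_pow (show 0 < v by omega) z j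
    exact ⟨(m : ℤ), by rw [zpow_natCast, hpow m, hm]⟩
  calc v = (Finset.univ.image (fun j : Fin v => (i, j))).card := by
        rw [Finset.card_image_of_injective _ (fun a b hab => by simpa using hab)]
        simp
    _ ≤ _ := Finset.card_le_card hsub

lemma utilA_piH (hh : 2 ≤ h) (hv : 2 ≤ v) (lam : ℕ → ℝ) (p : Fin h × Fin v) :
    utilA lam (piH h v) p = if p.2.val = 0 then lam h else 0 := by
  obtain ⟨a, b⟩ := p
  unfold utilA
  by_cases hb : b.val = 0
  · have hne : piH h v (a, b) ≠ (a, b) := by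
      rw [piH_apply_black a hb]
      exact fun hc => finRotate_ne hh a (congrArg Prod.fst hc)
    rw [if_pos hb, if_pos hne, card_cycleOf_piH hh hv hb a]
  · have heq : piH h v (a, b) = (a, b) := piH_apply_white a hb
    rw [if_neg hb, if_neg (not_not.mpr heq)]

lemma feasT {k n : ℕ} {γ : Type*} [Fintype γ] [DecidableEq γ]
    (e : γ ≃ Fin n) (W : γ → Finset γ) (σ : Equiv.Perm γ) :
    Feasible k (fun a => (W (e.symm a)).image e) (e.permCongr σ) ↔
      ∀ p, σ p ≠ p → σ p ∈ W p ∧ (σ.cycleOf p).support.card ≤ k := by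
  constructor
  · intro H p hp
    have hp' : (e.permCongr σ) (e p) ≠ e p := by simp [hp]
    obtain ⟨h1, h2⟩ := H (e p) hp'
    simp only [e.symm_apply_apply] at h1
    constructor
    · have h1' : e (σ p) ∈ (W p).image e := by simpa using h1
      obtain ⟨q, hq, hqe⟩ := Finset.mem_image.mp h1'
      rwa [← e.injective hqe]
    · unfold cycLen at h2
      rwa [card_cycleOf_permCongr] at h2
  · intro H a ha
    have hp : σ (e.symm a) ≠ e.symm a := by
      intro hc
      apply ha
      simp [Equiv.permCongr_apply, hc]
    obtain ⟨h1, h2⟩ := H _ hp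
    constructor
    · simpa [Equiv.permCongr_apply] using Finset.mem_image_of_mem e h1
    · unfold cycLen
      have hc := card_cycleOf_permCongr e σ (e.symm a)
      rw [e.apply_symm_apply] at hc
      rw [hc]
      exact h2

lemma wishT (hh : 2 ≤ h) (hv : 2 ≤ v) {n : ℕ} (e : Fin h × Fin v ≃ Fin n)
    (S : Finset (Fin h)) :
    IsWishList (fun a => (WS h v S (e.symm a)).image e) := by
  intro a hmem
  obtain ⟨p, hp, hep⟩ := Finset.mem_image.mp hmem
  have hpa : p = e.symm a := by rw [← hep, e.symm_apply_apply]
  rw [hpa] at hp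
  set q := e.symm a with hq
  have hne1 : q = (finRotate h q.1, q.2) → False := fun hc =>
    finRotate_ne hh q.1 (congrArg Prod.fst hc.symm)
  have hne2 : q = (q.1, finRotate v q.2) → False := fun hc =>
    finRotate_ne hv q.2 (congrArg Prod.snd hc.symm)
  unfold WS at hp
  split at hp
  · split at hp
    · exact hne1 (Finset.mem_singleton.mp hp)
    · rcases Finset.mem_insert.mp hp with hA | hB
      · exact hne1 hA
      · exact hne2 (Finset.mem_singleton.mp hB)
  · exact hne2 (Finset.mem_singleton.mp hp)

end CombAux

/-- Lemma: every truthful mechanism outputs `π_H` on the comb.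
Let `k ≥ 3`, let `λ` be a (non-uniform) length function, and let `2 ≤ h < v ≤ k` with
`λ(v) < λ(h)`.  Then every truthful `(k,λ)`-BE mechanism `f` admitting some
approximation ratio `r ≥ 1` outputs, on the `(h,v)`-comb wish list vector,
exactly the exchange `π_H` (transported to `Fin (h·v)` along `finProdFinEquiv`). -/
theorem truthful_mechanism_comb_output
    (k : ℕ) (hk : 3 ≤ k) (lam : ℕ → ℝ) (hlam : IsLengthFunction k lam)
    (h v : ℕ) (hh : 2 ≤ h) (hhv : h < v) (hvk : v ≤ k) (hlt : lam v < lam h)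
    (f : Mechanism) (hmech : IsMechanism k f) (htruth : Truthful k lam f)
    (r : ℝ) (happrox : ApproxRatio k lam f r) :
    f (h * v)
        (fun a => (combW h v (finProdFinEquiv.symm a)).image finProdFinEquiv)
      = finProdFinEquiv.permCongr (piH h v) := by
  obtain ⟨v', rfl⟩ : ∃ v', v = v' + 1 := ⟨v - 1, by omega⟩
  have hv2 : 2 ≤ v' + 1 := by omega
  set e : Fin h × Fin (v' + 1) ≃ Fin (h * (v' + 1)) := finProdFinEquiv with he
  have hz : ((0 : Fin (v' + 1))).val = 0 := Fin.val_zero _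
  have hgoalW : (fun a => (combW h (v' + 1) (e.symm a)).image e)
      = (fun a => (WS h (v' + 1) (∅ : Finset (Fin h)) (e.symm a)).image e) := by
    funext a
    rw [WS_empty]
  rw [hgoalW]
  have hWL : ∀ S : Finset (Fin h),
      IsWishList (fun a => (WS h (v' + 1) S (e.symm a)).image e) :=
    fun S => wishT hh hv2 e S
  obtain ⟨hpos, hmono⟩ := hlam
  have hlamh : 0 < lam h := (hpos h hh (by omega)).1
  have key : ∀ T : Finset (Fin h),
      f (h * (v' + 1)) (fun a => (WS h (v' + 1) Tᶜ (e.symm a)).image e)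
        = e.permCongr (piH h (v' + 1)) := by
    intro T
    induction T using Finset.induction_on with
    | empty =>
      rw [Finset.compl_empty]
      set σ0 := e.permCongr.symm
        (f (h * (v' + 1)) (fun a => (WS h (v' + 1) Finset.univ (e.symm a)).image e)) with hσ0
      have hfs : f (h * (v' + 1)) (fun a => (WS h (v' + 1) Finset.univ (e.symm a)).image e)
          = e.permCongr σ0 := (Equiv.apply_symm_apply e.permCongr _).symm
      have hfeasF := hmech (h * (v' + 1)) _ (hWL Finset.univ)
      rw [hfs] at hfeasF
      have hfeas0 := (feasT e (WS h (v' + 1) Finset.univ) σ0).mp hfeasF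
      have hfeasW : ∀ p, σ0 p ≠ p → σ0 p ∈ WS h (v' + 1) Finset.univ p :=
        fun p hp => (hfeas0 p hp).1
      by_cases hex : ∃ i : Fin h, σ0 (i, (0 : Fin (v' + 1))) = (finRotate h i, 0)
      · obtain ⟨i0, hi0⟩ := hex
        rw [hfs, LeqPiH hh hv2 hfeasW hz hi0]
      · exfalso
        push_neg at hex
        have hfix : ∀ p : Fin h × Fin (v' + 1), σ0 p = p := by
          rintro ⟨a, b⟩
          by_contra hp
          by_cases hb : b.val = 0
          · have hbz : b = 0 := Fin.ext (by rw [hb, hz])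
            subst hbz
            have hm := hfeasW _ hp
            simp only [WS, hz, if_pos, Finset.mem_univ, if_true, Finset.mem_singleton] at hm
            exact hex a hm
          · have hvert := Lwhite hv2 hfeasW b.val b rfl hb hp 0 hz
            have hpart0 : σ0 (a, (0 : Fin (v' + 1))) ≠ (a, 0) := by
              rw [hvert]
              exact fun hc => finRotate_ne hv2 0 (congrArg Prod.snd hc)
            have hm := hfeasW _ hpart0
            simp only [WS, hz, if_pos, Finset.mem_univ, if_true, Finset.mem_singleton] at hm
            exact hex a hm
        have hσ1 : σ0 = 1 := Equiv.ext hfix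
        have hfeasPiH : Feasible k (fun a => (WS h (v' + 1) Finset.univ (e.symm a)).image e)
            (e.permCongr (piH h (v' + 1))) := by
          apply (feasT e (WS h (v' + 1) Finset.univ) (piH h (v' + 1))).mpr
          intro p hp
          have hb : p.2.val = 0 := by
            by_contra hb
            exact hp (piH_apply_white p.1 hb)
          constructor
          · have hblk : piH h (v' + 1) p = (finRotate h p.1, p.2) := piH_apply_black p.1 hb
            rw [hblk]
            simp only [WS, hb, if_pos, Finset.mem_univ, if_true, Finset.mem_singleton]
          · have hcc := card_cycleOf_piH hh hv2 hb p.1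
            exact le_of_eq_of_le hcc (by omega)
        have happ2 := happrox.2 (h * (v' + 1)) _ (hWL Finset.univ)
          (e.permCongr (piH h (v' + 1))) hfeasPiH
        have hSWpos : 0 < SW lam (e.permCongr (piH h (v' + 1))) := by
          rw [SW_permCongr]
          apply Finset.sum_pos'
          · intro p _
            rw [utilA_piH hh hv2]
            split
            · exact le_of_lt hlamh
            · exact le_refl 0
          · refine ⟨((⟨0, by omega⟩ : Fin h), (0 : Fin (v' + 1))), Finset.mem_univ _, ?_⟩
            rw [utilA_piH hh hv2]
            simpa using hlamh
        have hr0 : 0 < r := lt_of_lt_of_le one_pos happrox.1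
        rw [hfs, hσ1] at happ2
        have hSW1 : SW lam (e.permCongr (1 : Equiv.Perm (Fin h × Fin (v' + 1)))) = 0 := by
          rw [SW_permCongr]
          apply Finset.sum_eq_zero
          intro p _
          unfold utilA
          simp
        rw [hSW1] at happ2
        have hposr : 0 < (1 / r) * SW lam (e.permCongr (piH h (v' + 1))) :=
          mul_pos (by positivity) hSWpos
        linarith
    | @insert i T hiT ih =>
      rw [Finset.compl_insert]
      set S := Tᶜ with hS
      have hsub : ∀ a, (fun a => (WS h (v' + 1) S (e.symm a)).image e) a
          ⊆ (fun a => (WS h (v' + 1) (S.erase i) (e.symm a)).image e) a := by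
        intro a
        apply Finset.image_subset_image
        intro x hx
        unfold WS at hx ⊢
        by_cases h0 : (e.symm a).2.val = 0
        · rw [if_pos h0] at hx ⊢
          by_cases hpS : (e.symm a).1 ∈ S
          · rw [if_pos hpS] at hx
            by_cases hpE : (e.symm a).1 ∈ S.erase i
            · rw [if_pos hpE]; exact hx
            · rw [if_neg hpE]
              exact Finset.mem_insert.mpr (Or.inl (Finset.mem_singleton.mp hx))
          · rw [if_neg hpS] at hx
            rw [if_neg (fun hc => hpS (Finset.mem_of_mem_erase hc))]
            exact hx
        · rw [if_neg h0] at hx ⊢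
          exact hx
      have hupd : Function.update (fun a => (WS h (v' + 1) S (e.symm a)).image e)
            (e (i, (0 : Fin (v' + 1))))
            ((fun a => (WS h (v' + 1) (S.erase i) (e.symm a)).image e) (e (i, 0)))
          = (fun a => (WS h (v' + 1) (S.erase i) (e.symm a)).image e) := by
        funext a
        by_cases ha : a = e (i, (0 : Fin (v' + 1)))
        · rw [ha, Function.update_self]
        · rw [Function.update_of_ne ha]
          have hpa : e.symm a ≠ (i, (0 : Fin (v' + 1))) := by
            intro hc
            exact ha (by rw [← hc, e.apply_symm_apply])
          congr 1
          unfold WS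
          by_cases h0 : (e.symm a).2.val = 0
          · have hp1 : (e.symm a).1 ≠ i := by
              intro hc
              exact hpa (Prod.ext hc (Fin.ext (by rw [h0, hz])))
            by_cases hSm : (e.symm a).1 ∈ S
            · rw [if_pos h0, if_pos h0, if_pos hSm,
                if_pos (Finset.mem_erase.mpr ⟨hp1, hSm⟩)]
            · rw [if_pos h0, if_pos h0, if_neg hSm,
                if_neg (fun hc => hSm (Finset.mem_of_mem_erase hc))]
          · rw [if_neg h0, if_neg h0]
      have htr := htruth (h * (v' + 1))
        (fun a => (WS h (v' + 1) (S.erase i) (e.symm a)).image e)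
        (fun a => (WS h (v' + 1) S (e.symm a)).image e)
        (hWL (S.erase i)) hsub (e (i, (0 : Fin (v' + 1))))
      rw [hupd, ih] at htr
      have hLHS : utility lam (e.permCongr (piH h (v' + 1))) (e (i, (0 : Fin (v' + 1))))
          = lam h := by
        rw [utility_permCongr, utilA_piH hh hv2]
        simp
      rw [hLHS] at htr
      set σ := e.permCongr.symm
        (f (h * (v' + 1)) (fun a => (WS h (v' + 1) (S.erase i) (e.symm a)).image e)) with hσd
      have hfs : f (h * (v' + 1)) (fun a => (WS h (v' + 1) (S.erase i) (e.symm a)).image e)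
          = e.permCongr σ := (Equiv.apply_symm_apply e.permCongr _).symm
      have hfeasF := hmech (h * (v' + 1)) _ (hWL (S.erase i))
      rw [hfs] at hfeasF
      have hfeas0 := (feasT e (WS h (v' + 1) (S.erase i)) σ).mp hfeasF
      have hfeasW : ∀ p, σ p ≠ p → σ p ∈ WS h (v' + 1) (S.erase i) p :=
        fun p hp => (hfeas0 p hp).1
      rw [hfs, utility_permCongr] at htr
      by_cases hmove : σ (i, (0 : Fin (v' + 1))) = (i, 0)
      · exfalso
        unfold utilA at htr
        rw [if_neg (not_not.mpr hmove)] at htr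
        linarith
      · have hm := hfeasW _ hmove
        unfold WS at hm
        rw [if_pos hz] at hm
        have hcases : σ (i, (0 : Fin (v' + 1))) = (finRotate h i, 0)
            ∨ σ (i, (0 : Fin (v' + 1))) = (i, finRotate (v' + 1) 0) := by
          split at hm
          · exact Or.inl (Finset.mem_singleton.mp hm)
          · rcases Finset.mem_insert.mp hm with hA | hB
            · exact Or.inl hA
            · exact Or.inr (Finset.mem_singleton.mp hB)
        rcases hcases with hA | hB
        · rw [hfs, LeqPiH hh hv2 hfeasW hz hA]
        · exfalso
          have hcol := Lcol hv2 hfeasW hz hB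
          have hvle := card_cycleOf_vert hv2 hz hcol
          have hkle := (hfeas0 _ hmove).2
          unfold utilA at htr
          rw [if_pos hmove] at htr
          have hlamle : lam ((σ.cycleOf (i, (0 : Fin (v' + 1)))).support.card)
              ≤ lam (v' + 1) := hmono (v' + 1) _ hv2 hvle hkle
          linarith
  have h0 := key Finset.univ
  rw [Finset.compl_univ] at h0
  exact h0

end

end BarterExchange
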